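/- Let k be an algebraically closed field of characteristic different from 2. The set of SL₂(k)-conjugacy classes of totally marked degree two rational maps over k (ordered triples of fixed points together with an ordered pair of distinct critical points, modulo simultaneous Möbius transformation) is in bijection with W(k) = {(r₁, r₂, r₃) ∈ (k ∖ {−1, 0})³ : r₁r₂r₃ = 1} via the three cross ratios rᵢ = ((p_j − q₁)(p_{k'} − q₂))/((p_j − q₂)(p_{k'} − q₁)). -/

import Mathlib

namespace TotallyMarked

variable {k : Type*} [Field k]

/-- The bracket `[u, v] = u₀v₁ - u₁v₀` of two homogeneous coordinate vectors on `P¹`. -/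
def br (u v : Fin 2 → k) : k := u 0 * v 1 - u 1 * v 0

/-- The cross ratio of four points of `P¹` given in homogeneous coordinates:
`((p_j - q₁)(p_k - q₂))/((p_j - q₂)(p_k - q₁))`. -/
def crossRatio (pj pk q1 q2 : Fin 2 → k) : k :=
  (br pj q1 * br pk q2) / (br pj q2 * br pk q1)

/-- The triple of cross ratios `rᵢ` of an ordered triple of fixed points and ordered
pair of critical points, `rᵢ` being built from `p_{i+1}, p_{i+2}, q₁, q₂`. -/
def crT (p : Fin 3 → Fin 2 → k) (q : Fin 2 → Fin 2 → k) : Fin 3 → k :=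
  fun i => crossRatio (p (i + 1)) (p (i + 2)) (q 0) (q 1)

/-- A totally marked degree two rational map: five points of `P¹(k)` (three ordered
fixed points and two ordered critical points) with `q₁ ≠ q₂`, all cross ratios
defined, finite and nonzero, and each cross ratio `≠ -1`. -/
def Marked (p : Fin 3 → Fin 2 → k) (q : Fin 2 → Fin 2 → k) : Prop :=
  (∀ i, p i ≠ 0) ∧ (∀ j, q j ≠ 0) ∧ br (q 0) (q 1) ≠ 0 ∧
    (∀ i j, br (p i) (q j) ≠ 0) ∧ (∀ i, crT p q i ≠ -1)

/-- `SL₂(k)`-equivalence of totally marked tuples: a single matrix of determinant one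
moves the five points (in homogeneous coordinates, up to nonzero scalars) of one tuple
to those of the other. -/
def MEquiv (p p' : Fin 3 → Fin 2 → k) (q q' : Fin 2 → Fin 2 → k) : Prop :=
  ∃ M : Matrix.SpecialLinearGroup (Fin 2) k,
    (∀ i, ∃ c : k, c ≠ 0 ∧ p' i = c • (M.val).mulVec (p i)) ∧
    (∀ j, ∃ c : k, c ≠ 0 ∧ q' j = c • (M.val).mulVec (q j))

lemma br_smul_smul (c d : k) (u v : Fin 2 → k) : br (c • u) (d • v) = c * d * br u v := by
  simp [br]; ring

lemma br_mulVec (M : Matrix (Fin 2) (Fin 2) k) (u v : Fin 2 → k) :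
    br (M.mulVec u) (M.mulVec v) = M.det * br u v := by
  simp [br, Matrix.mulVec, dotProduct, Fin.sum_univ_two, Matrix.det_fin_two]; ring

lemma br_sl (M : Matrix.SpecialLinearGroup (Fin 2) k) (c d : k) (u v : Fin 2 → k) :
    br (c • M.val.mulVec u) (d • M.val.mulVec v) = c * d * br u v := by
  rw [br_smul_smul, br_mulVec, M.prop, one_mul]

lemma crT_mequiv {p p' : Fin 3 → Fin 2 → k} {q q' : Fin 2 → Fin 2 → k}
    (h : MEquiv p p' q q') : crT p' q' = crT p q := by
  obtain ⟨M, hp, hq⟩ := h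
  funext i
  obtain ⟨c1, hc1, e1⟩ := hp (i + 1)
  obtain ⟨c2, hc2, e2⟩ := hp (i + 2)
  obtain ⟨d0, hd0, f0⟩ := hq 0
  obtain ⟨d1, hd1, f1⟩ := hq 1
  have hs : c1 * c2 * d0 * d1 ≠ 0 :=
    mul_ne_zero (mul_ne_zero (mul_ne_zero hc1 hc2) hd0) hd1
  simp only [crT, crossRatio, e1, e2, f0, f1, br_sl]
  rw [show c1 * d0 * br (p (i+1)) (q 0) * (c2 * d1 * br (p (i+2)) (q 1))
      = (c1 * c2 * d0 * d1) * (br (p (i+1)) (q 0) * br (p (i+2)) (q 1)) by ring,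
    show c1 * d1 * br (p (i+1)) (q 1) * (c2 * d0 * br (p (i+2)) (q 0))
      = (c1 * c2 * d0 * d1) * (br (p (i+1)) (q 1) * br (p (i+2)) (q 0)) by ring,
    mul_div_mul_left _ _ hs]

lemma mequiv_symm {p p' : Fin 3 → Fin 2 → k} {q q' : Fin 2 → Fin 2 → k}
    (h : MEquiv p p' q q') : MEquiv p' p q' q := by
  obtain ⟨M, hp, hq⟩ := h
  have key : ∀ u v : Fin 2 → k, ∀ c : k, c ≠ 0 → v = c • M.val.mulVec u →
      u = c⁻¹ • (M⁻¹).val.mulVec v := by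
    intro u v c hc hv
    rw [hv, Matrix.mulVec_smul, Matrix.mulVec_mulVec]
    have h1 : (M⁻¹).val * M.val = 1 := by
      rw [← Matrix.SpecialLinearGroup.coe_mul, inv_mul_cancel]
      rfl
    rw [h1, Matrix.one_mulVec, smul_smul, inv_mul_cancel₀ hc, one_smul]
  refine ⟨M⁻¹, fun i => ?_, fun j => ?_⟩
  · obtain ⟨c, hc, e⟩ := hp i
    exact ⟨c⁻¹, inv_ne_zero hc, key _ _ c hc e⟩
  · obtain ⟨c, hc, e⟩ := hq j
    exact ⟨c⁻¹, inv_ne_zero hc, key _ _ c hc e⟩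

lemma mequiv_trans {p p' p'' : Fin 3 → Fin 2 → k} {q q' q'' : Fin 2 → Fin 2 → k}
    (h : MEquiv p p' q q') (h' : MEquiv p' p'' q' q'') : MEquiv p p'' q q'' := by
  obtain ⟨M, hp, hq⟩ := h
  obtain ⟨N, hp', hq'⟩ := h'
  have key : ∀ u v w : Fin 2 → k, ∀ c d : k, v = c • M.val.mulVec u →
      w = d • N.val.mulVec v → w = (d * c) • (N * M).val.mulVec u := by
    intro u v w c d hv hw
    rw [hw, hv, Matrix.mulVec_smul, smul_smul, Matrix.mulVec_mulVec,
      Matrix.SpecialLinearGroup.coe_mul]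
  refine ⟨N * M, fun i => ?_, fun j => ?_⟩
  · obtain ⟨c, hc, e⟩ := hp i
    obtain ⟨d, hd, e'⟩ := hp' i
    exact ⟨d * c, mul_ne_zero hd hc, key _ _ _ _ _ e e'⟩
  · obtain ⟨c, hc, e⟩ := hq j
    obtain ⟨d, hd, e'⟩ := hq' j
    exact ⟨d * c, mul_ne_zero hd hc, key _ _ _ _ _ e e'⟩

lemma crT_normal (x : Fin 3 → k) :
    crT (fun i => ![x i, 1]) ![![(0:k),1],![1,0]] = fun i => x (i+1) / x (i+2) := by
  funext i
  simp only [crT, crossRatio, br]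
  simp only [Matrix.cons_val_zero, Matrix.cons_val_one, Matrix.head_cons]
  ring_nf

lemma normalize [IsAlgClosed k] {p : Fin 3 → Fin 2 → k} {q : Fin 2 → Fin 2 → k}
    (h : Marked p q) :
    ∃ x : Fin 3 → k, (∀ i, x i ≠ 0) ∧
      MEquiv p (fun i => ![x i, 1]) q ![![(0:k),1],![1,0]] := by
  obtain ⟨hp0, hq0, hΔ, hpq, hcr⟩ := h
  set a := q 0 0
  set b := q 0 1
  set c := q 1 0
  set d := q 1 1
  have hΔ' : a * d - b * c ≠ 0 := hΔ
  obtain ⟨s, hs⟩ := IsAlgClosed.exists_pow_nat_eq (-(a * d - b * c))⁻¹ (n := 2) (by norm_num)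
  have hs0 : s ≠ 0 := by
    intro h0
    rw [h0] at hs
    have h1 : (-(a * d - b * c))⁻¹ = 0 := by rw [← hs]; ring
    rw [inv_eq_zero, neg_eq_zero] at h1
    exact hΔ' h1
  set N : Matrix (Fin 2) (Fin 2) k := s • ![![-b, a], ![d, -c]] with hN
  have hdet : N.det = 1 := by
    rw [hN]
    refine (Matrix.det_smul (![![-b, a], ![d, -c]] : Matrix (Fin 2) (Fin 2) k) s).trans ?_
    refine (congrArg (fun x => s ^ Fintype.card (Fin 2) * x) (Matrix.det_fin_two (![![-b, a], ![d, -c]] : Matrix (Fin 2) (Fin 2) k))).trans ?_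
    simp only [Matrix.cons_val_zero, Matrix.cons_val_one, Matrix.head_cons, Fintype.card_fin]
    rw [show (-b * -c - a * d : k) = -(a * d - b * c) by ring, hs,
      inv_mul_cancel₀ (neg_ne_zero.mpr hΔ')]
  set M : Matrix.SpecialLinearGroup (Fin 2) k := ⟨N, hdet⟩ with hM
  set e := s * (a * d - b * c) with he'
  have he : e ≠ 0 := mul_ne_zero hs0 hΔ'
  have hmq0 : N.mulVec (q 0) = ![0, e] := by
    funext j
    fin_cases j <;>
      simp [hN, he', Matrix.mulVec, dotProduct, Fin.sum_univ_two, a, b, c, d] <;> ring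
  have hmq1 : N.mulVec (q 1) = ![e, 0] := by
    funext j
    fin_cases j <;>
      simp [hN, he', Matrix.mulVec, dotProduct, Fin.sum_univ_two, a, b, c, d] <;> ring
  have hv0 : ∀ i, N.mulVec (p i) 0 ≠ 0 := by
    intro i hz
    have hb : br (N.mulVec (p i)) (N.mulVec (q 0)) = br (p i) (q 0) := by
      rw [br_mulVec, hdet, one_mul]
    rw [hmq0] at hb
    apply hpq i 0
    rw [← hb]
    simp [br, hz]
  have hv1 : ∀ i, N.mulVec (p i) 1 ≠ 0 := by
    intro i hz
    have hb : br (N.mulVec (p i)) (N.mulVec (q 1)) = br (p i) (q 1) := by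
      rw [br_mulVec, hdet, one_mul]
    rw [hmq1] at hb
    apply hpq i 1
    rw [← hb]
    simp [br, hz]
  refine ⟨fun i => N.mulVec (p i) 0 / N.mulVec (p i) 1,
    fun i => div_ne_zero (hv0 i) (hv1 i), M, fun i => ?_, fun j => ?_⟩
  · refine ⟨(N.mulVec (p i) 1)⁻¹, inv_ne_zero (hv1 i), ?_⟩
    funext j
    fin_cases j
    · simp [div_eq_inv_mul, hM]
    · simp [hM]
      rw [inv_mul_cancel₀]
      simpa [Matrix.mulVec, dotProduct, Fin.sum_univ_two] using hv1 i
  · fin_cases j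
    · refine ⟨e⁻¹, inv_ne_zero he, ?_⟩
      show ![(0:k), 1] = e⁻¹ • N.mulVec (q 0)
      rw [hmq0]
      funext j
      fin_cases j <;> simp [inv_mul_cancel₀ he]
    · refine ⟨e⁻¹, inv_ne_zero he, ?_⟩
      show ![(1:k), 0] = e⁻¹ • N.mulVec (q 1)
      rw [hmq1]
      funext j
      fin_cases j <;> simp [inv_mul_cancel₀ he]

/-- Main theorem: over an algebraically closed field of characteristic ≠ 2, the set of
`SL₂(k)`-conjugacy classes of totally marked degree two rational maps is in bijection
with `W(k) = {(r₁,r₂,r₃) ∈ (k∖{-1,0})³ : r₁r₂r₃ = 1}` via the cross ratios: the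
cross ratio triple of a marked tuple lies in `W(k)`, two marked tuples are
`SL₂`-equivalent iff they have the same cross ratios, and every point of `W(k)` arises. -/
theorem moduli_bijection [IsAlgClosed k] (h2 : (2 : k) ≠ 0) :
    (∀ (p : Fin 3 → Fin 2 → k) (q : Fin 2 → Fin 2 → k), Marked p q →
      (∀ i, crT p q i ≠ -1 ∧ crT p q i ≠ 0) ∧
        crT p q 0 * crT p q 1 * crT p q 2 = 1) ∧
    (∀ (p p' : Fin 3 → Fin 2 → k) (q q' : Fin 2 → Fin 2 → k),
      Marked p q → Marked p' q' → (MEquiv p p' q q' ↔ crT p q = crT p' q')) ∧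
    (∀ r : Fin 3 → k, (∀ i, r i ≠ -1 ∧ r i ≠ 0) → r 0 * r 1 * r 2 = 1 →
      ∃ (p : Fin 3 → Fin 2 → k) (q : Fin 2 → Fin 2 → k), Marked p q ∧ crT p q = r) := by
  refine ⟨?_, ?_, ?_⟩
  · -- cross ratios lie in W(k)
    intro p q h
    obtain ⟨hp0, hq0, hΔ, hpq, hcr⟩ := h
    constructor
    · intro i
      refine ⟨hcr i, ?_⟩
      exact div_ne_zero (mul_ne_zero (hpq _ 0) (hpq _ 1)) (mul_ne_zero (hpq _ 1) (hpq _ 0))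
    · have e0 : crT p q 0
          = (br (p 1) (q 0) * br (p 2) (q 1)) / (br (p 1) (q 1) * br (p 2) (q 0)) := rfl
      have e1 : crT p q 1
          = (br (p 2) (q 0) * br (p 0) (q 1)) / (br (p 2) (q 1) * br (p 0) (q 0)) := rfl
      have e2 : crT p q 2
          = (br (p 0) (q 0) * br (p 1) (q 1)) / (br (p 0) (q 1) * br (p 1) (q 0)) := rfl
      have hne : (br (p 1) (q 1) * br (p 2) (q 0)) * (br (p 2) (q 1) * br (p 0) (q 0))
          * (br (p 0) (q 1) * br (p 1) (q 0)) ≠ 0 :=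
        mul_ne_zero (mul_ne_zero (mul_ne_zero (hpq 1 1) (hpq 2 0))
          (mul_ne_zero (hpq 2 1) (hpq 0 0))) (mul_ne_zero (hpq 0 1) (hpq 1 0))
      rw [e0, e1, e2, div_mul_div_comm, div_mul_div_comm, div_eq_one_iff_eq hne]
      ring
  · -- equivalence iff same cross ratios
    intro p p' q q' h h'
    constructor
    · intro he
      exact (crT_mequiv he).symm
    · intro hcr
      obtain ⟨x, hx, hE⟩ := normalize h
      obtain ⟨x', hx', hE'⟩ := normalize h'
      have hx_eq : (fun i => x (i+1) / x (i+2)) = (fun i => x' (i+1) / x' (i+2)) := by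
        rw [← crT_normal x, ← crT_normal x', crT_mequiv hE, crT_mequiv hE', hcr]
      have h20 : x 0 / x 1 = x' 0 / x' 1 := congrFun hx_eq 2
      have h10 : x 2 / x 0 = x' 2 / x' 0 := congrFun hx_eq 1
      set lam := x' 0 / x 0 with hlamdef
      have hlam : lam ≠ 0 := div_ne_zero (hx' 0) (hx 0)
      have h20' : x 0 * x' 1 = x' 0 * x 1 := by
        rw [div_eq_div_iff (hx 1) (hx' 1)] at h20
        exact h20
      have h10' : x 2 * x' 0 = x' 2 * x 0 := by
        rw [div_eq_div_iff (hx 0) (hx' 0)] at h10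
        exact h10
      have hl0 : x' 0 = lam * x 0 := by
        rw [hlamdef, div_mul_cancel₀ _ (hx 0)]
      have hl1 : x' 1 = lam * x 1 := by
        rw [hlamdef, div_mul_eq_mul_div, eq_div_iff (hx 0)]
        linear_combination h20'
      have hl2 : x' 2 = lam * x 2 := by
        rw [hlamdef, div_mul_eq_mul_div, eq_div_iff (hx 0)]
        linear_combination -h10'
      have hl : ∀ i, x' i = lam * x i := by
        intro i
        fin_cases i
        · exact hl0
        · exact hl1
        · exact hl2
      obtain ⟨t, ht⟩ := IsAlgClosed.exists_pow_nat_eq lam (n := 2) (by norm_num)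
      have ht0 : t ≠ 0 := by
        intro h0
        rw [h0] at ht
        exact hlam (by rw [← ht]; ring)
      set D : Matrix (Fin 2) (Fin 2) k := !![t, 0; 0, t⁻¹] with hD
      have hdet : D.det = 1 := by
        rw [hD, Matrix.det_fin_two_of, mul_inv_cancel₀ ht0]
        ring
      have hDx : ∀ a : k, D.mulVec ![a, 1] = ![t * a, t⁻¹] := by
        intro a
        funext j
        fin_cases j <;> simp [hD, Matrix.mulVec, dotProduct, Fin.sum_univ_two]
      have hD0 : D.mulVec ![(0:k), 1] = ![0, t⁻¹] := by
        funext j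
        fin_cases j <;> simp [hD, Matrix.mulVec, dotProduct, Fin.sum_univ_two]
      have hD1 : D.mulVec ![(1:k), 0] = ![t, 0] := by
        funext j
        fin_cases j <;> simp [hD, Matrix.mulVec, dotProduct, Fin.sum_univ_two]
      have hmid : MEquiv (fun i => ![x i, 1]) (fun i => ![x' i, 1])
          ![![(0:k),1],![1,0]] ![![(0:k),1],![1,0]] := by
        refine ⟨⟨D, hdet⟩, fun i => ⟨t, ht0, ?_⟩, fun j => ?_⟩
        · show ![x' i, 1] = t • D.mulVec ![x i, 1]
          rw [hDx]
          funext j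
          fin_cases j
          · show x' i = t * (t * x i)
            rw [hl i, ← ht]
            ring
          · show (1 : k) = t * t⁻¹
            rw [mul_inv_cancel₀ ht0]
        · fin_cases j
          · refine ⟨t, ht0, ?_⟩
            show ![(0:k), 1] = t • D.mulVec ![(0:k), 1]
            rw [hD0]
            funext j
            fin_cases j
            · show (0:k) = t * 0
              ring
            · show (1:k) = t * t⁻¹
              rw [mul_inv_cancel₀ ht0]
          · refine ⟨t⁻¹, inv_ne_zero ht0, ?_⟩
            show ![(1:k), 0] = t⁻¹ • D.mulVec ![(1:k), 0]
            rw [hD1]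
            funext j
            fin_cases j
            · show (1:k) = t⁻¹ * t
              rw [inv_mul_cancel₀ ht0]
            · show (0:k) = t⁻¹ * 0
              ring
      exact mequiv_trans (mequiv_trans hE hmid) (mequiv_symm hE')
  · -- surjectivity
    intro r hr hprod
    set x : Fin 3 → k := ![1, (r 2)⁻¹, r 1] with hxdef
    have hx : ∀ i, x i ≠ 0 := by
      intro i
      fin_cases i
      · exact one_ne_zero
      · exact inv_ne_zero (hr 2).2
      · exact (hr 1).2
    have hcrt : crT (fun i => ![x i, 1]) ![![(0:k),1],![1,0]] = r := by
      rw [crT_normal]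
      funext i
      fin_cases i
      · show x 1 / x 2 = r 0
        have ea : x 1 = (r 2)⁻¹ := rfl
        have eb : x 2 = r 1 := rfl
        rw [ea, eb, div_eq_iff (hr 1).2]
        rw [inv_eq_iff_eq_inv]
        exact eq_inv_of_mul_eq_one_left (by linear_combination hprod)
      · show x 2 / x 0 = r 1
        simp [hxdef]
      · show x 0 / x 1 = r 2
        simp [hxdef]
    refine ⟨fun i => ![x i, 1], ![![(0:k),1],![1,0]], ⟨?_, ?_, ?_, ?_, ?_⟩, hcrt⟩
    · intro i hcontra
      simpa using congrFun hcontra 1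
    · intro j
      fin_cases j
      · intro hcontra
        simpa using congrFun hcontra 1
      · intro hcontra
        simpa using congrFun hcontra 0
    · show (0 : k) * 0 - 1 * 1 ≠ 0
      simp
    · intro i j
      fin_cases j
      · show x i * 1 - 1 * 0 ≠ 0
        simpa using hx i
      · show x i * 0 - 1 * 1 ≠ 0
        simp
    · intro i
      rw [hcrt]
      exact (hr i).1

end TotallyMarked
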